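/- The DP Successive Elimination algorithm (Algorithm 3) is ε-differentially private: for any two streams of arm-rewards (all rewards in [0,1]) that differ on the reward of a single arm in a single timestep, and any set O of possible sequences of decisions of the algorithm, the probability of producing a decision sequence in O under one stream is at most e^ε times the probability under the neighboring stream. -/

import Mathlib

open MeasureTheory ProbabilityTheory

/-- The Laplace distribution `Lap(λ)` on `ℝ`, with density `x ↦ e^{-|x|/λ}/(2λ)` w.r.t.
Lebesgue measure. -/
noncomputable def laplaceMeasure (lam : ℝ) : Measure ℝ :=
  volume.withDensity fun x => ENNReal.ofReal (Real.exp (-|x| / lam) / (2 * lam))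

/-- The gap target `Δ_e = 2^{-e}` of epoch `e` of DP Successive Elimination. -/
noncomputable def seGap (e : ℕ) : ℝ := (2 : ℝ) ^ (-(e : ℝ))

/-- The number of pulls per viable arm in epoch `e` when `s` arms are viable:
`R_e = max(32·log(8s·e²/β)/Δ_e², 8·log(4s·e²/β)/(ε·Δ_e)) + 1`. -/
noncomputable def epochLen (ε β : ℝ) (s e : ℕ) : ℕ :=
  ⌈max (32 * Real.log (8 * (s : ℝ) * (e : ℝ) ^ 2 / β) / seGap e ^ 2)
      (8 * Real.log (4 * (s : ℝ) * (e : ℝ) ^ 2 / β) / (ε * seGap e))⌉₊ + 1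

/-- The state of DP Successive Elimination after `e` epochs, given the reward table `x`
(`x i j` is the reward of the `j`-th pull of arm `i`) and standard-Laplace noises `N`
(`N e i` is the `Lap(1)` noise used for arm `i` in epoch `e`, so that `N e i/(ε·R_e)` is the
`Lap(1/(ε·R_e))` noise of the algorithm): the pair of the viable set `S` and of the number
of pulls so far of each arm. In each epoch the algorithm takes `R_e` fresh rewards per
viable arm, forms noisy means `μ̃_i`, and removes every `j` with
`μ̃_max - μ̃_j > 2h_e + 2c_e`; it stops eliminating once `|S| = 1`. -/
noncomputable def seState (K : ℕ) (ε β : ℝ) (x : Fin K → ℕ → ℝ) (N : ℕ → Fin K → ℝ) :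
    ℕ → Finset (Fin K) × (Fin K → ℕ)
  | 0 => (Finset.univ, fun _ => 0)
  | e + 1 =>
    let prev := seState K ε β x N e
    let S := prev.1
    let used := prev.2
    if h : S.card ≤ 1 then prev
    else
      have hS : S.Nonempty := Finset.card_pos.mp (by omega)
      let n := epochLen ε β S.card (e + 1)
      let noisyMean : Fin K → ℝ := fun i =>
        (∑ j ∈ Finset.range n, x i (used i + j)) / n + N (e + 1) i / (ε * n)
      let he : ℝ := Real.sqrt (Real.log (8 * (S.card : ℝ) * ((e : ℝ) + 1) ^ 2 / β) / (2 * n))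
      let ce : ℝ := Real.log (4 * (S.card : ℝ) * ((e : ℝ) + 1) ^ 2 / β) / (n * ε)
      (S.filter fun j => S.sup' hS noisyMean - noisyMean j ≤ 2 * he + 2 * ce,
       fun i => used i + if i ∈ S then n else 0)

instance (n : ℕ) : MeasurableSpace (Finset (Fin n)) := ⊤

namespace SEDP

/-- The per-arm noisy mean used in epoch `e+1` from state `p` with per-arm noise `v`. -/
noncomputable def nMean (K : ℕ) (ε β : ℝ) (x : Fin K → ℕ → ℝ) (e : ℕ)
    (p : Finset (Fin K) × (Fin K → ℕ)) (v : Fin K → ℝ) (i : Fin K) : ℝ :=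
  (∑ j ∈ Finset.range (epochLen ε β p.1.card (e + 1)), x i (p.2 i + j)) /
      (epochLen ε β p.1.card (e + 1) : ℕ) +
    v i / (ε * (epochLen ε β p.1.card (e + 1) : ℕ))

/-- One epoch step of DP Successive Elimination. -/
noncomputable def seStep (K : ℕ) (ε β : ℝ) (x : Fin K → ℕ → ℝ) (e : ℕ)
    (p : Finset (Fin K) × (Fin K → ℕ)) (v : Fin K → ℝ) : Finset (Fin K) × (Fin K → ℕ) :=
  if h : p.1.card ≤ 1 then p
  else
    have hS : p.1.Nonempty := Finset.card_pos.mp (by omega)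
    let n := epochLen ε β p.1.card (e + 1)
    let he : ℝ := Real.sqrt (Real.log (8 * (p.1.card : ℝ) * ((e : ℝ) + 1) ^ 2 / β) / (2 * n))
    let ce : ℝ := Real.log (4 * (p.1.card : ℝ) * ((e : ℝ) + 1) ^ 2 / β) / (n * ε)
    (p.1.filter fun j =>
        p.1.sup' hS (nMean K ε β x e p v) - nMean K ε β x e p v j ≤ 2 * he + 2 * ce,
     fun i => p.2 i + if i ∈ p.1 then n else 0)

variable {K : ℕ} {ε β : ℝ}

lemma seState_succ (x : Fin K → ℕ → ℝ) (M : ℕ → Fin K → ℝ) (e : ℕ) :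
    seState K ε β x M (e + 1) = seStep K ε β x e (seState K ε β x M e) (M (e + 1)) := rfl

end SEDP
namespace SEDP

variable {K : ℕ} {ε β : ℝ}

lemma used_le_succ (x : Fin K → ℕ → ℝ) (M : ℕ → Fin K → ℝ) (e : ℕ) (i : Fin K) :
    (seState K ε β x M e).2 i ≤ (seState K ε β x M (e + 1)).2 i := by
  rw [seState_succ]
  unfold seStep
  split
  · exact le_rfl
  · exact Nat.le_add_right _ _

lemma used_mono (x : Fin K → ℕ → ℝ) (M : ℕ → Fin K → ℝ) (i : Fin K) :
    Monotone fun e => (seState K ε β x M e).2 i :=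
  monotone_nat_of_le_succ fun e => used_le_succ x M e i

lemma used_succ_of (x : Fin K → ℕ → ℝ) (M : ℕ → Fin K → ℝ) (e : ℕ) {i0 : Fin K}
    (h1 : ¬ (seState K ε β x M e).1.card ≤ 1) (h2 : i0 ∈ (seState K ε β x M e).1) :
    (seState K ε β x M (e + 1)).2 i0 =
      (seState K ε β x M e).2 i0 + epochLen ε β (seState K ε β x M e).1.card (e + 1) := by
  rw [seState_succ]
  unfold seStep
  rw [dif_neg h1]
  simp [h2]

/-- `hits x i0 t0 M e` : in epoch `e+1` (from state at time `e`), arm `i0` is viable and its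
pulls in that epoch cover timestep `t0`. -/
def hits (K : ℕ) (ε β : ℝ) (x : Fin K → ℕ → ℝ) (i0 : Fin K) (t0 : ℕ)
    (M : ℕ → Fin K → ℝ) (e : ℕ) : Prop :=
  1 < (seState K ε β x M e).1.card ∧ i0 ∈ (seState K ε β x M e).1 ∧
    (seState K ε β x M e).2 i0 ≤ t0 ∧
    t0 < (seState K ε β x M e).2 i0 + epochLen ε β (seState K ε β x M e).1.card (e + 1)

lemma hits_mutex (x : Fin K → ℕ → ℝ) {i0 : Fin K} {t0 : ℕ} (M : ℕ → Fin K → ℝ)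
    {a b : ℕ} (hab : a < b) (ha : hits K ε β x i0 t0 M a) : ¬ hits K ε β x i0 t0 M b := by
  intro hb
  have h1 := used_succ_of x M a (not_le.mpr ha.1) ha.2.1
  have h2 : (seState K ε β x M (a + 1)).2 i0 ≤ (seState K ε β x M b).2 i0 :=
    used_mono x M i0 (by omega)
  have h3 := ha.2.2.2
  have h4 := hb.2.2.1
  omega

lemma seState_congr_noise (x : Fin K → ℕ → ℝ) {M M' : ℕ → Fin K → ℝ} :
    ∀ k, (∀ e, e ≤ k → M e = M' e) → seState K ε β x M k = seState K ε β x M' k := by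
  intro k
  induction k with
  | zero => intro _; rfl
  | succ k ih =>
    intro h
    rw [seState_succ, seState_succ, ih (fun e he => h e (he.trans (Nat.le_succ k))),
      h (k + 1) le_rfl]

lemma seStep_congr (x x' : Fin K → ℕ → ℝ) (e : ℕ) (p : Finset (Fin K) × (Fin K → ℕ))
    (v v' : Fin K → ℝ)
    (H : ∀ i ∈ p.1, nMean K ε β x e p v i = nMean K ε β x' e p v' i) :
    seStep K ε β x e p v = seStep K ε β x' e p v' := by
  unfold seStep
  split
  · rfl
  · next h =>
    have hS : p.1.Nonempty := Finset.card_pos.mp (by omega)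
    have hsup : p.1.sup' hS (nMean K ε β x e p v) = p.1.sup' hS (nMean K ε β x' e p v') :=
      Finset.sup'_congr hS rfl H
    refine Prod.ext ?_ rfl
    exact Finset.filter_congr fun j hj => by rw [hsup, H j hj]

end SEDP
namespace SEDP

variable {K : ℕ} {ε β : ℝ} {x x' : Fin K → ℕ → ℝ} {i0 : Fin K} {t0 : ℕ}

lemma epochLen_pos (s e : ℕ) : 0 < epochLen ε β s e := Nat.succ_pos _

lemma agree_of_hits (hε : 0 < ε)
    (hd : ∀ i t, ¬(i = i0 ∧ t = t0) → x i t = x' i t)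
    (M M' : ℕ → Fin K → ℝ) (e0 : ℕ)
    (hM : ∀ e i, ¬(e = e0 + 1 ∧ i = i0) → M e i = M' e i)
    (hM0 : M' (e0 + 1) i0 = M (e0 + 1) i0 + ε * (x i0 t0 - x' i0 t0))
    (hhit : hits K ε β x i0 t0 M e0) :
    ∀ k, seState K ε β x M k = seState K ε β x' M' k := by
  intro k
  induction k with
  | zero => rfl
  | succ k ih =>
    rw [seState_succ, seState_succ, ← ih]
    set p := seState K ε β x M k with hp
    by_cases hcard : p.1.card ≤ 1
    · unfold seStep; rw [dif_pos hcard, dif_pos hcard]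
    · apply seStep_congr
      intro i hi
      unfold nMean
      set n := epochLen ε β p.1.card (k + 1) with hn
      have hnpos : 0 < n := epochLen_pos _ _
      have hnne : (n : ℝ) ≠ 0 := Nat.cast_ne_zero.mpr hnpos.ne'
      rcases eq_or_ne i i0 with rfl | hii
      · rcases lt_trichotomy k e0 with hk | hk | hk
        · -- window strictly below t0
          have hnoise : M (k + 1) i = M' (k + 1) i := hM _ _ (by rintro ⟨h1, -⟩; omega)
          have hub : p.2 i + n ≤ t0 := by
            have h1 : (seState K ε β x M (k + 1)).2 i = p.2 i + n :=
              used_succ_of x M k hcard hi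
            have h2 : (seState K ε β x M (k + 1)).2 i ≤ (seState K ε β x M e0).2 i :=
              used_mono x M i (by omega)
            have h3 := hhit.2.2.1
            omega
          have hsum : ∀ j ∈ Finset.range n, x i (p.2 i + j) = x' i (p.2 i + j) := by
            intro j hj
            have := Finset.mem_range.mp hj
            exact hd _ _ (by rintro ⟨-, h2⟩; omega)
          rw [Finset.sum_congr rfl hsum, hnoise]
        · -- the shifted epoch
          subst hk
          have hu : p.2 i ≤ t0 := hhit.2.2.1
          have hun : t0 < p.2 i + n := hhit.2.2.2
          have hsum : (∑ j ∈ Finset.range n, x i (p.2 i + j))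
              = (∑ j ∈ Finset.range n, x' i (p.2 i + j)) + (x i t0 - x' i t0) := by
            have h1 : ∑ j ∈ Finset.range n, (x i (p.2 i + j) - x' i (p.2 i + j))
                = x i (p.2 i + (t0 - p.2 i)) - x' i (p.2 i + (t0 - p.2 i)) := by
              apply Finset.sum_eq_single_of_mem
              · exact Finset.mem_range.mpr (by omega)
              · intro j hj hne
                rw [hd _ _ ?_, sub_self]
                rintro ⟨-, h2⟩
                exact hne (by omega)
            have h2 : p.2 i + (t0 - p.2 i) = t0 := by omega
            rw [h2] at h1
            rw [Finset.sum_sub_distrib] at h1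
            linarith
          rw [hsum, hM0]
          have hεne : ε ≠ 0 := hε.ne'
          field_simp
          ring
        · -- window strictly above t0
          have hnoise : M (k + 1) i = M' (k + 1) i := hM _ _ (by rintro ⟨h1, -⟩; omega)
          have hlb : t0 < p.2 i := by
            have h1 := used_succ_of x M e0 (not_le.mpr hhit.1) hhit.2.1
            have h2 : (seState K ε β x M (e0 + 1)).2 i ≤ p.2 i :=
              used_mono x M i (by omega)
            have h3 := hhit.2.2.2
            omega
          have hsum : ∀ j ∈ Finset.range n, x i (p.2 i + j) = x' i (p.2 i + j) := by
            intro j hj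
            exact hd _ _ (by rintro ⟨-, h2⟩; omega)
          rw [Finset.sum_congr rfl hsum, hnoise]
      · have hnoise : M (k + 1) i = M' (k + 1) i := hM _ _ (by rintro ⟨-, h2⟩; exact hii h2)
        have hsum : ∀ j ∈ Finset.range n, x i (p.2 i + j) = x' i (p.2 i + j) := by
          intro j hj
          exact hd _ _ (by rintro ⟨h1, -⟩; exact hii h1)
        rw [Finset.sum_congr rfl hsum, hnoise]

lemma agree_of_never
    (hd : ∀ i t, ¬(i = i0 ∧ t = t0) → x i t = x' i t)
    (M : ℕ → Fin K → ℝ)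
    (hnever : ∀ e, ¬ hits K ε β x i0 t0 M e) :
    ∀ k, seState K ε β x M k = seState K ε β x' M k := by
  intro k
  induction k with
  | zero => rfl
  | succ k ih =>
    rw [seState_succ, seState_succ, ← ih]
    set p := seState K ε β x M k with hp
    by_cases hcard : p.1.card ≤ 1
    · unfold seStep; rw [dif_pos hcard, dif_pos hcard]
    · apply seStep_congr
      intro i hi
      unfold nMean
      set n := epochLen ε β p.1.card (k + 1) with hn
      rcases eq_or_ne i i0 with rfl | hii
      · have hh := hnever k
        unfold hits at hh
        rw [← hp] at hh
        push_neg at hh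
        have hwin : t0 < p.2 i ∨ p.2 i + n ≤ t0 := by
          by_cases hu : p.2 i ≤ t0
          · exact Or.inr (hh (not_le.mp hcard) hi hu)
          · exact Or.inl (not_le.mp hu)
        have hsum : ∀ j ∈ Finset.range n, x i (p.2 i + j) = x' i (p.2 i + j) := by
          intro j hj
          have := Finset.mem_range.mp hj
          exact hd _ _ (by rintro ⟨-, h2⟩; omega)
        rw [Finset.sum_congr rfl hsum]
      · have hsum : ∀ j ∈ Finset.range n, x i (p.2 i + j) = x' i (p.2 i + j) := by
          intro j hj
          exact hd _ _ (by rintro ⟨h1, -⟩; exact hii h1)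
        rw [Finset.sum_congr rfl hsum]

end SEDP
namespace SEDP

instance (n : ℕ) : MeasurableSingletonClass (Finset (Fin n)) := ⟨fun _ => trivial⟩

variable {K : ℕ} {ε β : ℝ}

lemma measurable_filter_aux (S : Finset (Fin K)) (hS : S.Nonempty)
    (f : (Fin K → ℝ) → Fin K → ℝ) (hf : ∀ i, Measurable fun v => f v i) (C : ℝ) :
    Measurable fun v => S.filter (fun j => S.sup' hS (f v) - f v j ≤ C) := by
  apply measurable_to_countable'
  intro S'
  have hP : ∀ j, MeasurableSet {v : Fin K → ℝ | S.sup' hS (f v) - f v j ≤ C} := by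
    intro j
    have h1 : {v : Fin K → ℝ | S.sup' hS (f v) - f v j ≤ C}
        = ⋂ i ∈ S, {v | f v i - f v j ≤ C} := by
      ext v
      simp only [Set.mem_setOf_eq, Set.mem_iInter, sub_le_iff_le_add, Finset.sup'_le_iff]
    rw [h1]
    exact MeasurableSet.biInter S.countable_toSet fun i _ =>
      measurableSet_le ((hf i).sub (hf j)) measurable_const
  have h2 : (fun v => S.filter fun j => S.sup' hS (f v) - f v j ≤ C) ⁻¹' {S'} =
      ⋂ j : Fin K, {v | ((j ∈ S ∧ S.sup' hS (f v) - f v j ≤ C) ↔ j ∈ S')} := by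
    ext v
    simp [Finset.ext_iff, Finset.mem_filter]
  rw [h2]
  refine MeasurableSet.iInter fun j => ?_
  by_cases hj1 : j ∈ S <;> by_cases hj2 : j ∈ S' <;>
    simp only [hj1, hj2, true_and, false_and, iff_true, iff_false, Set.setOf_true,
      Set.setOf_false, MeasurableSet.univ, Set.compl_setOf]
  · exact hP j
  · exact (hP j).compl
  · exact MeasurableSet.empty

lemma measurable_seStep (x : Fin K → ℕ → ℝ) (e : ℕ) (p : Finset (Fin K) × (Fin K → ℕ)) :
    Measurable (seStep K ε β x e p) := by
  unfold seStep
  by_cases hc : p.1.card ≤ 1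
  · simp only [dif_pos hc]
    exact measurable_const
  · simp only [dif_neg hc]
    have hS : p.1.Nonempty := Finset.card_pos.mp (by omega)
    have hm : ∀ i, Measurable fun v : Fin K → ℝ => nMean K ε β x e p v i := by
      intro i
      unfold nMean
      exact measurable_const.add ((measurable_pi_apply i).div_const _)
    exact (measurable_filter_aux p.1 hS _ hm _).prodMk measurable_const

lemma measurable_of_countable_fst {A B C : Type*} [MeasurableSpace A] [MeasurableSpace B]
    [MeasurableSpace C] [Countable A] [MeasurableSingletonClass A]
    (g : A → B → C) (hg : ∀ a, Measurable (g a)) :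
    Measurable fun q : A × B => g q.1 q.2 := by
  intro s hs
  have h : (fun q : A × B => g q.1 q.2) ⁻¹' s = ⋃ a : A, ({a} ×ˢ (g a ⁻¹' s)) := by
    ext ⟨a, b⟩
    simp
  rw [h]
  exact MeasurableSet.iUnion fun a => (measurableSet_singleton a).prod (hg a hs)

lemma measurable_seState (x : Fin K → ℕ → ℝ) (e : ℕ) :
    Measurable fun M : ℕ → Fin K → ℝ => seState K ε β x M e := by
  induction e with
  | zero => exact measurable_const
  | succ e ih =>
    have h : (fun M : ℕ → Fin K → ℝ => seState K ε β x M (e + 1))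
        = (fun q : (Finset (Fin K) × (Fin K → ℕ)) × (Fin K → ℝ) => seStep K ε β x e q.1 q.2)
          ∘ fun M => (seState K ε β x M e, M (e + 1)) := rfl
    rw [h]
    exact (measurable_of_countable_fst _ (measurable_seStep x e)).comp
      (ih.prodMk (measurable_pi_apply (e + 1)))

lemma measurable_state_event (x : Fin K → ℕ → ℝ) (e : ℕ)
    (s : Set (Finset (Fin K) × (Fin K → ℕ))) :
    MeasurableSet {M : ℕ → Fin K → ℝ | seState K ε β x M e ∈ s} :=
  (measurable_seState (ε := ε) (β := β) x e) ((Set.to_countable s).measurableSet)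

lemma measurable_out (x : Fin K → ℕ → ℝ) :
    Measurable fun (M : ℕ → Fin K → ℝ) (e : ℕ) => (seState K ε β x M e).1 :=
  measurable_pi_lambda _ fun e => measurable_fst.comp (measurable_seState x e)

end SEDP
namespace SEDP

lemma lap_density_measurable :
    Measurable fun y : ℝ => ENNReal.ofReal (Real.exp (-|y| / 1) / (2 * 1)) :=
  ((Real.measurable_exp.comp ((measurable_abs.neg).div_const 1)).div_const _).ennreal_ofReal

lemma lap_density_shift (c y : ℝ) :
    ENNReal.ofReal (Real.exp (-|y| / 1) / (2 * 1)) ≤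
      ENNReal.ofReal (Real.exp |c|) * ENNReal.ofReal (Real.exp (-|y + c| / 1) / (2 * 1)) := by
  rw [← ENNReal.ofReal_mul (Real.exp_pos _).le]
  apply ENNReal.ofReal_le_ofReal
  rw [div_one, div_one, ← mul_div_assoc]
  gcongr
  rw [← Real.exp_add]
  apply Real.exp_le_exp.mpr
  have := abs_add_le y c
  linarith

/-- Core Laplace-shift inequality on a product. -/
lemma shift_bound {α : Type*} [MeasurableSpace α] (ν : Measure α) [SFinite ν] (c : ℝ)
    (C C' : Set (ℝ × α)) (hC : MeasurableSet C) (hC' : MeasurableSet C')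
    (hslice : ∀ y z, (y, z) ∈ C ↔ (y + c, z) ∈ C') :
    ((laplaceMeasure 1).prod ν) C ≤
      ENNReal.ofReal (Real.exp |c|) * ((laplaceMeasure 1).prod ν) C' := by
  have hg : Measurable fun y => ν (Prod.mk y ⁻¹' C) := measurable_measure_prodMk_left hC
  have hg' : Measurable fun y => ν (Prod.mk y ⁻¹' C') := measurable_measure_prodMk_left hC'
  rw [Measure.prod_apply hC, Measure.prod_apply hC']
  unfold laplaceMeasure
  rw [lintegral_withDensity_eq_lintegral_mul _ lap_density_measurable hg,
    lintegral_withDensity_eq_lintegral_mul _ lap_density_measurable hg']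
  have hsl : ∀ y, Prod.mk y ⁻¹' C = Prod.mk (y + c) ⁻¹' C' := by
    intro y
    ext z
    exact hslice y z
  calc ∫⁻ y, ((fun a => ENNReal.ofReal (Real.exp (-|a| / 1) / (2 * 1))) * fun y =>
          ν (Prod.mk y ⁻¹' C)) y ∂volume
      = ∫⁻ y, ENNReal.ofReal (Real.exp (-|y| / 1) / (2 * 1)) * ν (Prod.mk (y + c) ⁻¹' C')
          ∂volume := by
        simp only [Pi.mul_apply]
        congr 1
        ext y
        rw [hsl y]
    _ ≤ ∫⁻ y, ENNReal.ofReal (Real.exp |c|) *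
          (ENNReal.ofReal (Real.exp (-|y + c| / 1) / (2 * 1)) * ν (Prod.mk (y + c) ⁻¹' C'))
          ∂volume := by
        apply lintegral_mono
        intro y
        dsimp only
        rw [← mul_assoc]
        exact mul_le_mul_left (lap_density_shift c y) _
    _ = ENNReal.ofReal (Real.exp |c|) * ∫⁻ y,
          ENNReal.ofReal (Real.exp (-|y + c| / 1) / (2 * 1)) * ν (Prod.mk (y + c) ⁻¹' C')
          ∂volume := by
        rw [lintegral_const_mul' _ _ ENNReal.ofReal_ne_top]
    _ = ENNReal.ofReal (Real.exp |c|) * ∫⁻ y,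
          ENNReal.ofReal (Real.exp (-|y| / 1) / (2 * 1)) * ν (Prod.mk y ⁻¹' C') ∂volume := by
        congr 1
        exact lintegral_add_right_eq_self
          (fun y => ENNReal.ofReal (Real.exp (-|y| / 1) / (2 * 1)) * ν (Prod.mk y ⁻¹' C')) c
    _ = ENNReal.ofReal (Real.exp |c|) * ∫⁻ y, ((fun a => ENNReal.ofReal (Real.exp (-|a| / 1) /
          (2 * 1))) * fun y => ν (Prod.mk y ⁻¹' C')) y ∂volume := by
        simp only [Pi.mul_apply]

end SEDP

/-- Theorem 5: DP Successive Elimination is `ε`-differentially private. For any two reward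
tables with entries in `[0,1]` differing on the reward of a single arm at a single
timestep, and any measurable set `O` of decision sequences (the sequence of viable sets
produced by the algorithm), the probability (over the independent standard-Laplace noises)
of producing a decision sequence in `O` under one table is at most `e^ε` times the
probability under the other. -/
theorem stmt7 {Ω : Type*} [MeasureSpace Ω] [IsProbabilityMeasure (ℙ : Measure Ω)]
    (K : ℕ) (hK : 0 < K) (ε β : ℝ) (hε : 0 < ε) (hβ0 : 0 < β) (hβ1 : β < 1)
    (N : ℕ → Fin K → Ω → ℝ)
    (hNm : ∀ e i, Measurable (N e i))
    (hNlaw : ∀ e i, Measure.map (N e i) ℙ = laplaceMeasure 1)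
    (hNindep : iIndepFun (fun p : ℕ × Fin K => N p.1 p.2) ℙ) :
    ∀ x x' : Fin K → ℕ → ℝ,
      (∀ i t, x i t ∈ Set.Icc (0 : ℝ) 1) → (∀ i t, x' i t ∈ Set.Icc (0 : ℝ) 1) →
      (∃ i0 t0, ∀ i t, ¬(i = i0 ∧ t = t0) → x i t = x' i t) →
      ∀ O : Set (ℕ → Finset (Fin K)), MeasurableSet O →
        ℙ {ω | (fun e => (seState K ε β x (fun e' i => N e' i ω) e).1) ∈ O} ≤
          ENNReal.ofReal (Real.exp ε) *
            ℙ {ω | (fun e => (seState K ε β x' (fun e' i => N e' i ω) e).1) ∈ O} := by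
  classical
  intro x x' hx hx' hnbr O hO
  obtain ⟨i0, t0, hd⟩ := hnbr
  open SEDP in
  -- the noise vector
  set NN : Ω → ℕ → Fin K → ℝ := fun ω e i => N e i ω with hNNdef
  have hNN : Measurable NN :=
    measurable_pi_lambda _ fun e => measurable_pi_lambda _ fun i => hNm e i
  -- the shift constant
  set c : ℝ := ε * (x i0 t0 - x' i0 t0) with hcdef
  have hcabs : |c| ≤ ε := by
    obtain ⟨a1, a2⟩ := hx i0 t0
    obtain ⟨b1, b2⟩ := hx' i0 t0
    have h1 : |x i0 t0 - x' i0 t0| ≤ 1 := by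
      rw [abs_le]; constructor <;> linarith
    calc |c| = |ε| * |x i0 t0 - x' i0 t0| := abs_mul _ _
      _ = ε * |x i0 t0 - x' i0 t0| := by rw [abs_of_pos hε]
      _ ≤ ε * 1 := mul_le_mul_of_nonneg_left h1 hε.le
      _ = ε := mul_one ε
  have hT1 : (1 : ENNReal) ≤ ENNReal.ofReal (Real.exp ε) := by
    rw [← ENNReal.ofReal_one]
    apply ENNReal.ofReal_le_ofReal
    rw [← Real.exp_zero]
    exact Real.exp_le_exp.mpr hε.le
  -- events in noise-vector space
  set Hset : ℕ → Set (ℕ → Fin K → ℝ) := fun e =>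
    {M | 1 < (seState K ε β x M e).1.card ∧ i0 ∈ (seState K ε β x M e).1 ∧
      (seState K ε β x M e).2 i0 ≤ t0 ∧
      t0 < (seState K ε β x M e).2 i0 +
        epochLen ε β (seState K ε β x M e).1.card (e + 1)} with hHsetdef
  have hHhits : ∀ e M, M ∈ Hset e ↔ hits K ε β x i0 t0 M e := fun _ _ => Iff.rfl
  have hHm : ∀ e, MeasurableSet (Hset e) := fun e =>
    measurable_state_event x e {p | 1 < p.1.card ∧ i0 ∈ p.1 ∧ p.2 i0 ≤ t0 ∧
      t0 < p.2 i0 + epochLen ε β p.1.card (e + 1)}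
  set Ox : Set (ℕ → Fin K → ℝ) := (fun M e => (seState K ε β x M e).1) ⁻¹' O with hOxdef
  set Ox' : Set (ℕ → Fin K → ℝ) := (fun M e => (seState K ε β x' M e).1) ⁻¹' O with hOx'def
  have hOxm : MeasurableSet Ox := measurable_out x hO
  have hOx'm : MeasurableSet Ox' := measurable_out x' hO
  -- the per-epoch privacy bound
  have key : ∀ e0 : ℕ, ℙ (NN ⁻¹' (Hset e0 ∩ Ox)) ≤
      ENNReal.ofReal (Real.exp ε) * ℙ (NN ⁻¹' (Hset e0 ∩ Ox')) := by
    intro e0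
    set p0 : ℕ × Fin K := (e0 + 1, i0) with hp0def
    set Y : Ω → ℝ := N (e0 + 1) i0 with hYdef
    set Z : Ω → ℕ → Fin K → ℝ := fun ω e i => if (e, i) = p0 then 0 else N e i ω with hZdef
    set asm : ℝ × (ℕ → Fin K → ℝ) → ℕ → Fin K → ℝ :=
      fun q e i => if (e, i) = p0 then q.1 else q.2 e i with hasmdef
    have hasm_meas : Measurable asm := by
      apply measurable_pi_lambda
      intro e
      apply measurable_pi_lambda
      intro i
      by_cases h : (e, i) = p0
      · simp only [hasmdef, if_pos h]
        exact measurable_fst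
      · simp only [hasmdef, if_neg h]
        exact (measurable_pi_apply i).comp ((measurable_pi_apply e).comp measurable_snd)
    have hYm : Measurable Y := hNm _ _
    have hZm : Measurable Z := by
      apply measurable_pi_lambda
      intro e
      apply measurable_pi_lambda
      intro i
      by_cases h : (e, i) = p0
      · simp only [hZdef, if_pos h]; exact measurable_const
      · simp only [hZdef, if_neg h]; exact hNm e i
    have hasmYZ : ∀ ω, asm (Y ω, Z ω) = NN ω := by
      intro ω
      funext e i
      by_cases h : (e, i) = p0
      · have h1 : e = e0 + 1 := congrArg Prod.fst h
        have h2 : i = i0 := congrArg Prod.snd h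
        simp only [hasmdef, if_pos h, hYdef, hNNdef, h1, h2]
        simp [hp0def]
      · simp only [hasmdef, if_neg h, hZdef, if_neg h, hNNdef]
    have hYZ : IndepFun Y Z ℙ := by
      have hbig := indep_biSup_compl (fun p : ℕ × Fin K => (hNm p.1 p.2).comap_le)
        hNindep ({p0} : Set (ℕ × Fin K))
      have hle1 : MeasurableSpace.comap Y inferInstance ≤
          ⨆ p ∈ ({p0} : Set (ℕ × Fin K)),
            MeasurableSpace.comap (fun ω => N p.1 p.2 ω) inferInstance :=
        le_iSup₂ (f := fun (p : ℕ × Fin K) (_ : p ∈ ({p0} : Set (ℕ × Fin K))) =>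
          MeasurableSpace.comap (fun ω => N p.1 p.2 ω) inferInstance) p0 rfl
      set m' : MeasurableSpace Ω := ⨆ p ∈ (({p0} : Set (ℕ × Fin K))ᶜ),
        MeasurableSpace.comap (fun ω => N p.1 p.2 ω) inferInstance with hm'def
      have hZ' : Measurable[m'] Z := by
        letI : MeasurableSpace Ω := m'
        apply measurable_pi_lambda
        intro e
        apply measurable_pi_lambda
        intro i
        by_cases h : (e, i) = p0
        · simp only [hZdef, if_pos h]; exact measurable_const
        · simp only [hZdef, if_neg h]
          exact Measurable.of_comap_le (le_iSup₂ (f := fun (p : ℕ × Fin K)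
            (_ : p ∈ (({p0} : Set (ℕ × Fin K))ᶜ)) =>
            MeasurableSpace.comap (fun ω => N p.1 p.2 ω) inferInstance) (e, i) h)
      exact indep_of_indep_of_le_right (indep_of_indep_of_le_left hbig hle1) hZ'.comap_le
    haveI : IsProbabilityMeasure (Measure.map Z ℙ) := Measure.isProbabilityMeasure_map hZm.aemeasurable
    have hmap : Measure.map (fun ω => (Y ω, Z ω)) ℙ = (laplaceMeasure 1).prod (Measure.map Z ℙ) := by
      have h := (indepFun_iff_map_prod_eq_prod_map_map hYm.aemeasurable hZm.aemeasurable).mp hYZ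
      rw [h, hYdef, hNlaw (e0 + 1) i0]
    set C : Set (ℝ × (ℕ → Fin K → ℝ)) := asm ⁻¹' (Hset e0 ∩ Ox) with hCdef
    set C' : Set (ℝ × (ℕ → Fin K → ℝ)) := asm ⁻¹' (Hset e0 ∩ Ox') with hC'def
    have hCm : MeasurableSet C := hasm_meas ((hHm e0).inter hOxm)
    have hC'm : MeasurableSet C' := hasm_meas ((hHm e0).inter hOx'm)
    have hps : ℙ (NN ⁻¹' (Hset e0 ∩ Ox)) = ((laplaceMeasure 1).prod (Measure.map Z ℙ)) C := by
      have hpre : (fun ω => (Y ω, Z ω)) ⁻¹' C = NN ⁻¹' (Hset e0 ∩ Ox) := by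
        ext ω
        simp only [Set.mem_preimage, hCdef]
        rw [hasmYZ ω]
      rw [← hpre, ← hmap, Measure.map_apply (hYm.prodMk hZm) hCm]
    have hps' : ℙ (NN ⁻¹' (Hset e0 ∩ Ox')) = ((laplaceMeasure 1).prod (Measure.map Z ℙ)) C' := by
      have hpre : (fun ω => (Y ω, Z ω)) ⁻¹' C' = NN ⁻¹' (Hset e0 ∩ Ox') := by
        ext ω
        simp only [Set.mem_preimage, hC'def]
        rw [hasmYZ ω]
      rw [← hpre, ← hmap, Measure.map_apply (hYm.prodMk hZm) hC'm]
    have hslice : ∀ y z, (y, z) ∈ C ↔ (y + c, z) ∈ C' := by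
      intro y z
      set M : ℕ → Fin K → ℝ := asm (y, z) with hMdef
      set M' : ℕ → Fin K → ℝ := asm (y + c, z) with hM'def
      have hMM' : ∀ e i, ¬(e = e0 + 1 ∧ i = i0) → M e i = M' e i := by
        intro e i h
        have hne : (e, i) ≠ p0 := by
          simp only [hp0def, Ne, Prod.mk.injEq]
          exact h
        simp only [hMdef, hM'def, hasmdef, if_neg hne]
      have hM0 : M' (e0 + 1) i0 = M (e0 + 1) i0 + ε * (x i0 t0 - x' i0 t0) := by
        simp only [hMdef, hM'def, hasmdef, hp0def, eq_self_iff_true, if_true, hcdef]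
      have hstate : seState K ε β x M e0 = seState K ε β x M' e0 :=
        seState_congr_noise x e0 fun e he =>
          funext fun i => hMM' e i (by rintro ⟨h1, -⟩; omega)
      have hHiff : M ∈ Hset e0 ↔ M' ∈ Hset e0 := by
        simp only [hHsetdef, Set.mem_setOf_eq, hstate]
      constructor
      · rintro ⟨hh, ho⟩
        refine ⟨hHiff.mp hh, ?_⟩
        have hag := agree_of_hits hε hd M M' e0 hMM' hM0 ((hHhits e0 M).mp hh)
        have heq : (fun e => (seState K ε β x' M' e).1) = fun e => (seState K ε β x M e).1 :=
          funext fun k => congrArg Prod.fst (hag k).symm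
        show (fun e => (seState K ε β x' M' e).1) ∈ O
        rw [heq]; exact ho
      · rintro ⟨hh, ho⟩
        refine ⟨hHiff.mpr hh, ?_⟩
        have hag := agree_of_hits hε hd M M' e0 hMM' hM0 ((hHhits e0 M).mp (hHiff.mpr hh))
        have heq : (fun e => (seState K ε β x M e).1) = fun e => (seState K ε β x' M' e).1 :=
          funext fun k => congrArg Prod.fst (hag k)
        show (fun e => (seState K ε β x M e).1) ∈ O
        rw [heq]; exact ho
    calc ℙ (NN ⁻¹' (Hset e0 ∩ Ox)) = ((laplaceMeasure 1).prod (Measure.map Z ℙ)) C := hps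
      _ ≤ ENNReal.ofReal (Real.exp |c|) * ((laplaceMeasure 1).prod (Measure.map Z ℙ)) C' :=
          shift_bound (Measure.map Z ℙ) c C C' hCm hC'm hslice
      _ ≤ ENNReal.ofReal (Real.exp ε) * ((laplaceMeasure 1).prod (Measure.map Z ℙ)) C' :=
          mul_le_mul_left (ENNReal.ofReal_le_ofReal (Real.exp_le_exp.mpr hcabs)) _
      _ = ENNReal.ofReal (Real.exp ε) * ℙ (NN ⁻¹' (Hset e0 ∩ Ox')) := by rw [hps']
  -- decompose the probability space according to which epoch covers `t0`
  set A : ℕ → Set Ω := fun e => NN ⁻¹' Hset e with hAdef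
  have hAm : ∀ e, MeasurableSet (A e) := fun e => hNN (hHm e)
  have hAdisj : Pairwise (Function.onFun Disjoint A) := by
    intro a b hab
    rw [Function.onFun, Set.disjoint_left]
    intro ω ha hb
    rcases lt_or_gt_of_ne hab with h | h
    · exact hits_mutex x (NN ω) h ((hHhits a (NN ω)).mp ha) ((hHhits b (NN ω)).mp hb)
    · exact hits_mutex x (NN ω) h ((hHhits b (NN ω)).mp hb) ((hHhits a (NN ω)).mp ha)
  have hsplit : ∀ E : Set Ω, MeasurableSet E →
      ℙ E = (∑' e, ℙ (A e ∩ E)) + ℙ ((⋃ e, A e)ᶜ ∩ E) := by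
    intro E hE
    have hcover : E = (⋃ e, A e ∩ E) ∪ ((⋃ e, A e)ᶜ ∩ E) := by
      rw [← Set.iUnion_inter, ← Set.union_inter_distrib_right, Set.union_compl_self,
        Set.univ_inter]
    have hd2 : Disjoint (⋃ e, A e ∩ E) ((⋃ e, A e)ᶜ ∩ E) :=
      (disjoint_compl_right.mono (Set.iUnion_mono fun e => Set.inter_subset_left)
        Set.inter_subset_left)
    conv_lhs => rw [hcover]
    rw [measure_union hd2 (((MeasurableSet.iUnion hAm).compl).inter hE),
      measure_iUnion (hAdisj.mono fun a b h =>
        h.mono Set.inter_subset_left Set.inter_subset_left)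
      (fun e => (hAm e).inter hE)]
  have htail : (⋃ e, A e)ᶜ ∩ NN ⁻¹' Ox = (⋃ e, A e)ᶜ ∩ NN ⁻¹' Ox' := by
    ext ω
    simp only [Set.mem_inter_iff, Set.mem_compl_iff, Set.mem_iUnion, not_exists,
      Set.mem_preimage]
    refine and_congr_right fun hnever => ?_
    have hnv : ∀ e, ¬ hits K ε β x i0 t0 (NN ω) e := fun e h => hnever e ((hHhits e (NN ω)).mpr h)
    have hag := agree_of_never hd (NN ω) hnv
    have heq : (fun e => (seState K ε β x (NN ω) e).1)
        = fun e => (seState K ε β x' (NN ω) e).1 :=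
      funext fun k => congrArg Prod.fst (hag k)
    rw [hOxdef, hOx'def, Set.mem_preimage, Set.mem_preimage, heq]
  show ℙ (NN ⁻¹' Ox) ≤ ENNReal.ofReal (Real.exp ε) * ℙ (NN ⁻¹' Ox')
  rw [hsplit _ (hNN hOxm), hsplit _ (hNN hOx'm)]
  have h1 : (∑' e, ℙ (A e ∩ NN ⁻¹' Ox)) ≤
      ∑' e, ENNReal.ofReal (Real.exp ε) * ℙ (A e ∩ NN ⁻¹' Ox') := by
    apply ENNReal.tsum_le_tsum
    intro e
    have hx1 : A e ∩ NN ⁻¹' Ox = NN ⁻¹' (Hset e ∩ Ox) := by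
      rw [hAdef, Set.preimage_inter]
    have hx2 : A e ∩ NN ⁻¹' Ox' = NN ⁻¹' (Hset e ∩ Ox') := by
      rw [hAdef, Set.preimage_inter]
    rw [hx1, hx2]
    exact key e
  have h2 : ℙ ((⋃ e, A e)ᶜ ∩ NN ⁻¹' Ox) ≤
      ENNReal.ofReal (Real.exp ε) * ℙ ((⋃ e, A e)ᶜ ∩ NN ⁻¹' Ox') := by
    rw [htail]
    exact le_mul_of_one_le_left zero_le hT1
  calc (∑' e, ℙ (A e ∩ NN ⁻¹' Ox)) + ℙ ((⋃ e, A e)ᶜ ∩ NN ⁻¹' Ox)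
      ≤ (∑' e, ENNReal.ofReal (Real.exp ε) * ℙ (A e ∩ NN ⁻¹' Ox')) +
        ENNReal.ofReal (Real.exp ε) * ℙ ((⋃ e, A e)ᶜ ∩ NN ⁻¹' Ox') := add_le_add h1 h2
    _ = ENNReal.ofReal (Real.exp ε) *
        ((∑' e, ℙ (A e ∩ NN ⁻¹' Ox')) + ℙ ((⋃ e, A e)ᶜ ∩ NN ⁻¹' Ox')) := by
        rw [ENNReal.tsum_mul_left, mul_add]
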